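/- Suppose q̄ ∈ ℝ^r has strictly positive entries and R(q̄) is robust positively invariant for x⁺ = A x + w, w ∈ W. Let Q = {q ∈ ℝ^r : 0 ≤ q ≤ q̄ componentwise}. Then for every q ∈ Q, the vector c(q) + d also lies in Q. -/
import Mathlib


open Matrix

/-- Support function `h(X, v) = sup {vᵀ x : x ∈ X}`. -/
noncomputable def suppFn {n : ℕ} (X : Set (Fin n → ℝ)) (v : Fin n → ℝ) : ℝ :=
  sSup ((fun x => v ⬝ᵥ x) '' X)

/-- `R(q) = {z : P z ≤ q}`. -/
def Rset {n r : ℕ} (P : Matrix (Fin r) (Fin n) ℝ) (q : Fin r → ℝ) : Set (Fin n → ℝ) :=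
  {z : Fin n → ℝ | P.mulVec z ≤ q}

/-- `b_i(q) = h(R(q), P_iᵀ)`. -/
noncomputable def bfun {n r : ℕ} (P : Matrix (Fin r) (Fin n) ℝ) (q : Fin r → ℝ) :
    Fin r → ℝ :=
  fun i => suppFn (Rset P q) (P i)

/-- `c_i(q) = h(A·R(q), P_iᵀ)`. -/
noncomputable def cfun {n r : ℕ} (A : Matrix (Fin n) (Fin n) ℝ)
    (P : Matrix (Fin r) (Fin n) ℝ) (q : Fin r → ℝ) : Fin r → ℝ :=
  fun i => suppFn (A.mulVec '' Rset P q) (P i)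

/-- `d_i = h(W, P_iᵀ)` where `W = {w : F w ≤ g}`. -/
noncomputable def dvec {n r p : ℕ} (F : Matrix (Fin p) (Fin n) ℝ) (g : Fin p → ℝ)
    (P : Matrix (Fin r) (Fin n) ℝ) : Fin r → ℝ :=
  fun i => suppFn {w : Fin n → ℝ | F.mulVec w ≤ g} (P i)

/-- `R` is robust positively invariant for `x⁺ = A x + w`, `w ∈ W`. -/
def IsRPI {n : ℕ} (A : Matrix (Fin n) (Fin n) ℝ) (W R : Set (Fin n → ℝ)) : Prop :=
  ∀ x ∈ R, ∀ w ∈ W, A.mulVec x + w ∈ R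

/-- if `R(q̄)` is RPI with `q̄ > 0`, then for every `q` with
`0 ≤ q ≤ q̄`, also `0 ≤ c(q) + d ≤ q̄`. -/
theorem cfun_add_dvec_mem_Q
    (n r p : ℕ)
    (A : Matrix (Fin n) (Fin n) ℝ)
    (F : Matrix (Fin p) (Fin n) ℝ) (g : Fin p → ℝ)
    (hg : ∀ j, 0 < g j)
    (W : Set (Fin n → ℝ)) (hW : W = {w : Fin n → ℝ | F.mulVec w ≤ g})
    (hWcompact : IsCompact W)
    (P : Matrix (Fin r) (Fin n) ℝ)
    (hspan : Submodule.span ℝ (Set.range fun i => P i) = ⊤)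
    (hP0 : {z : Fin n → ℝ | P.mulVec z ≤ 0} = {0})
    (qbar : Fin r → ℝ) (hqbar : ∀ i, 0 < qbar i)
    (hRPI : IsRPI A W (Rset P qbar)) :
    ∀ q : Fin r → ℝ, 0 ≤ q → q ≤ qbar →
      0 ≤ cfun A P q + dvec F g P ∧ cfun A P q + dvec F g P ≤ qbar := by
  intro q hq0 hqle
  -- basic memberships
  have h0W : (0 : Fin n → ℝ) ∈ {w : Fin n → ℝ | F.mulVec w ≤ g} := by
    simp only [Set.mem_setOf_eq, Matrix.mulVec_zero]
    intro j; exact (hg j).le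
  have h0Rq : (0 : Fin n → ℝ) ∈ Rset P q := by
    simp only [Rset, Set.mem_setOf_eq, Matrix.mulVec_zero]; exact hq0
  have hsub : Rset P q ⊆ Rset P qbar := by
    intro z hz i; exact le_trans (hz i) (hqle i)
  have h0Rqbar : (0 : Fin n → ℝ) ∈ Rset P qbar := hsub h0Rq
  -- sets whose sups are c i and d i
  have key : ∀ i, (0 ≤ cfun A P q i ∧ 0 ≤ dvec F g P i) ∧
      cfun A P q i + dvec F g P i ≤ qbar i := by
    intro i
    set S : Set ℝ := (fun x => P i ⬝ᵥ x) '' (A.mulVec '' Rset P q) with hSdef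
    set T : Set ℝ := (fun x => P i ⬝ᵥ x) '' {w : Fin n → ℝ | F.mulVec w ≤ g} with hTdef
    have hcS : cfun A P q i = sSup S := rfl
    have hdT : dvec F g P i = sSup T := rfl
    have h0S : (0 : ℝ) ∈ S := by
      refine ⟨A.mulVec 0, ⟨0, h0Rq, rfl⟩, ?_⟩
      simp [Matrix.mulVec_zero]
    have h0T : (0 : ℝ) ∈ T := by
      refine ⟨0, h0W, ?_⟩; simp
    -- every s ∈ S, t ∈ T satisfies s + t ≤ qbar i
    have hsum : ∀ s ∈ S, ∀ t ∈ T, s + t ≤ qbar i := by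
      rintro s ⟨y, ⟨x, hx, rfl⟩, rfl⟩ t ⟨w, hw, rfl⟩
      have hmem : A.mulVec x + w ∈ Rset P qbar := by
        apply hRPI x (hsub hx) w
        rw [hW]; exact hw
      have := hmem i
      rwa [Matrix.mulVec_add] at this
      -- `this : P.mulVec (A.mulVec x) i + P.mulVec w i ≤ qbar i`
    have hSbdd : BddAbove S := by
      refine ⟨qbar i, ?_⟩
      intro s hs
      have := hsum s hs 0 h0T
      linarith
    have hTbdd : BddAbove T := by
      refine ⟨qbar i, ?_⟩
      intro t ht
      have := hsum 0 h0S t ht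
      linarith
    have hc0 : 0 ≤ cfun A P q i := by rw [hcS]; exact le_csSup hSbdd h0S
    have hd0 : 0 ≤ dvec F g P i := by rw [hdT]; exact le_csSup hTbdd h0T
    refine ⟨⟨hc0, hd0⟩, ?_⟩
    rw [hcS, hdT]
    have hTle : ∀ s ∈ S, sSup T ≤ qbar i - s := by
      intro s hs
      apply csSup_le ⟨0, h0T⟩
      intro t ht
      have := hsum s hs t ht; linarith
    have : sSup S ≤ qbar i - sSup T := by
      apply csSup_le ⟨0, h0S⟩
      intro s hs
      have := hTle s hs; linarith
    linarith
  constructor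
  · intro i
    have := key i
    simp only [Pi.add_apply, Pi.zero_apply]
    linarith [this.1.1, this.1.2]
  · intro i
    have := key i
    simpa using this.2
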